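/- arXiv:0902.0041 — 5 statements merged into one kernel-verified Lean document; each statement's English description precedes it below -/
import Mathlib

section
/- Let K : ℝ → ℝ be differentiable with K(x) ≠ 0 for x in an open interval (α, β), K continuous on [α, β] with K(α) = K(β) = 0. Let P be a polynomial with n simple zeros γ₁ < … < γ_n, all in (α, β), and let Q(x) = (A(x)/K(x))·(d/dx)[K(x)P(x)] where A is a polynomial with A/K nonvanishing on (α, β) and Q is a polynomial of degree n+1. Then Q has n+1 real zeros δ₁ < … < δ_{n+1} in (α, β) satisfying the interlacing property α < δ₁ < γ₁ < δ₂ < γ₂ < … < δ_n < γ_n < δ_{n+1} < β. -/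
open Polynomial Set

theorem stmt_8 (n : ℕ) (α β : ℝ) (hab : α < β)
    (K : ℝ → ℝ)
    (hKcont : ContinuousOn K (Icc α β))
    (hKdiff : ∀ x ∈ Ioo α β, DifferentiableAt ℝ K x)
    (hKne : ∀ x ∈ Ioo α β, K x ≠ 0)
    (hKα : K α = 0) (hKβ : K β = 0)
    (P A Q : Polynomial ℝ)
    (hPdeg : P.degree = n)
    (γ : Fin n → ℝ) (hγmono : StrictMono γ)
    (hγmem : ∀ i, γ i ∈ Ioo α β)
    (hγroot : ∀ i, P.eval (γ i) = 0)
    (hγsimple : ∀ i, (derivative P).eval (γ i) ≠ 0)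
    (hAK : ∀ x ∈ Ioo α β, A.eval x / K x ≠ 0)
    (hQdeg : Q.degree = n + 1)
    (hQ : ∀ x ∈ Ioo α β,
      Q.eval x = (A.eval x / K x) * deriv (fun y => K y * P.eval y) x) :
    ∃ δ : Fin (n + 1) → ℝ, StrictMono δ ∧
      (∀ i, Q.eval (δ i) = 0) ∧
      (∀ i, δ i ∈ Ioo α β) ∧
      α < δ 0 ∧ δ (Fin.last n) < β ∧
      (∀ i : Fin n, δ i.castSucc < γ i ∧ γ i < δ i.succ) := by
  set γ' : Fin (n + 1) → ℝ := Fin.snoc γ β with hγ'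
  set e : Fin (n + 2) → ℝ := Fin.cons α γ' with he
  have he0 : e 0 = α := rfl
  have heS : ∀ j : Fin (n + 1), e j.succ = γ' j := fun j => by rw [he]; exact Fin.cons_succ _ _ _
  have heγ : ∀ i : Fin n, e i.castSucc.succ = γ i := fun i => by
    rw [heS, hγ', Fin.snoc_castSucc]
  have helast : e (Fin.last (n + 1)) = β := by
    rw [← Fin.succ_last, heS, hγ', Fin.snoc_last]
  -- auxiliary bounds on snoc
  have haux1 : ∀ m : Fin (n + 1), α < γ' m := by
    intro m
    induction m using Fin.lastCases with
    | last => rw [hγ', Fin.snoc_last]; exact hab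
    | cast i => rw [hγ', Fin.snoc_castSucc]; exact (hγmem i).1
  have haux2 : ∀ (k : Fin n) (m : Fin (n + 1)), k.castSucc < m → γ k < γ' m := by
    intro k m hkm
    induction m using Fin.lastCases with
    | last => rw [hγ', Fin.snoc_last]; exact (hγmem k).2
    | cast i =>
      rw [hγ', Fin.snoc_castSucc]
      exact hγmono (Fin.castSucc_lt_castSucc_iff.mp hkm)
  have heMono : StrictMono e := by
    rw [Fin.strictMono_iff_lt_succ]
    intro j
    rw [heS]
    induction j using Fin.cases with
    | zero => rw [Fin.castSucc_zero, he0]; exact haux1 0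
    | succ k =>
      rw [← Fin.succ_castSucc, heγ]
      exact haux2 k k.succ (Fin.castSucc_lt_succ : k.castSucc < k.succ)
  have hbound : ∀ j : Fin (n + 2), α ≤ e j ∧ e j ≤ β := fun j =>
    ⟨he0 ▸ heMono.monotone (Fin.zero_le j), helast ▸ heMono.monotone (Fin.le_last j)⟩
  -- F vanishes at each e j
  have hFzero : ∀ j : Fin (n + 2), K (e j) * P.eval (e j) = 0 := by
    intro j
    induction j using Fin.cases with
    | zero => rw [he0, hKα, zero_mul]
    | succ k =>
      rw [heS]
      induction k using Fin.lastCases with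
      | last => rw [hγ', Fin.snoc_last, hKβ, zero_mul]
      | cast i => rw [hγ', Fin.snoc_castSucc, hγroot i, mul_zero]
  -- Rolle on each subinterval
  have hRolle : ∀ j : Fin (n + 1), ∃ c ∈ Ioo (e j.castSucc) (e j.succ),
      deriv (fun y => K y * P.eval y) c = 0 := by
    intro j
    apply exists_deriv_eq_zero (heMono (Fin.castSucc_lt_succ : j.castSucc < j.succ))
    · have hsub : Icc (e j.castSucc) (e j.succ) ⊆ Icc α β :=
        Icc_subset_Icc (hbound _).1 (hbound _).2
      exact (hKcont.mono hsub).mul (P.continuous_aeval.continuousOn)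
    · rw [hFzero j.castSucc, hFzero j.succ]
  choose δ hδmem hδderiv using hRolle
  have hδIoo : ∀ j, δ j ∈ Ioo α β := fun j =>
    ⟨lt_of_le_of_lt (hbound j.castSucc).1 (hδmem j).1,
     lt_of_lt_of_le (hδmem j).2 (hbound j.succ).2⟩
  refine ⟨δ, ?_, ?_, hδIoo, ?_, ?_, ?_⟩
  · intro i j hij
    have h1 : i.succ ≤ j.castSucc := by
      rw [Fin.le_def]; rw [Fin.lt_def] at hij
      simp only [Fin.val_succ, Fin.coe_castSucc]; omega
    calc δ i < e i.succ := (hδmem i).2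
      _ ≤ e j.castSucc := heMono.monotone h1
      _ < δ j := (hδmem j).1
  · intro j
    rw [hQ (δ j) (hδIoo j), hδderiv j, mul_zero]
  · have := (hδmem 0).1
    rwa [Fin.castSucc_zero, he0] at this
  · have := (hδmem (Fin.last n)).2
    rwa [Fin.succ_last, helast] at this
  · intro i
    constructor
    · have := (hδmem i.castSucc).2
      rwa [heγ i] at this
    · have := (hδmem i.succ).1
      rwa [← Fin.succ_castSucc, heγ i] at this
end

section
/- For every n ≥ 1, all zeros of the Bell polynomial 𝔅_n(x) = Σ_{k=0}^n S(n,k) x^k are real, simple, and lie in the interval (−∞, 0]. -/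
open Polynomial

/-- Stirling numbers of the second kind. -/
def stirling2 : ℕ → ℕ → ℕ
  | 0, 0 => 1
  | 0, _ + 1 => 0
  | _ + 1, 0 => 0
  | n + 1, k + 1 => (k + 1) * stirling2 n (k + 1) + stirling2 n k

/-- The Bell polynomials. -/
noncomputable def bellPoly (n : ℕ) : Polynomial ℝ :=
  ∑ k ∈ Finset.range (n + 1), Polynomial.C (stirling2 n k : ℝ) * Polynomial.X ^ k

open Set Filter

lemma stirling2_zero_of_lt : ∀ n k, n < k → stirling2 n k = 0 := by
  intro n
  induction n with
  | zero => intro k hk; match k, hk with | k+1, _ => rfl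
  | succ m ih =>
    intro k hk
    match k, hk with
    | k+1, hk =>
      have h1 := ih (k+1) (by omega)
      have h2 := ih k (by omega)
      simp [stirling2, h1, h2]

lemma bellPoly_coeff (n k : ℕ) : (bellPoly n).coeff k = (stirling2 n k : ℝ) := by
  rw [bellPoly, Polynomial.finset_sum_coeff]
  simp only [Polynomial.coeff_C_mul, Polynomial.coeff_X_pow]
  rcases le_or_gt k n with h | h
  · rw [Finset.sum_eq_single k]
    · simp
    · intro b _ hb; simp [Ne.symm hb]
    · intro hk; exact absurd (Finset.mem_range.2 (by omega)) hk
  · rw [Finset.sum_eq_zero, stirling2_zero_of_lt n k h]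
    · simp
    · intro b hb
      have : b ≠ k := by have := Finset.mem_range.1 hb; omega
      simp [this, Ne.symm this]

lemma bellPoly_rec (n : ℕ) :
    bellPoly (n + 1) = X * (bellPoly n + derivative (bellPoly n)) := by
  ext k
  cases k with
  | zero =>
    simp [Polynomial.mul_coeff_zero, bellPoly_coeff]
    rfl
  | succ k =>
    rw [Polynomial.coeff_X_mul, bellPoly_coeff, Polynomial.coeff_add, bellPoly_coeff,
      Polynomial.coeff_derivative, bellPoly_coeff]
    show ((( k + 1) * stirling2 n (k + 1) + stirling2 n k : ℕ) : ℝ) = _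
    push_cast
    ring

lemma factor_of_roots {p : ℝ[X]} {m : ℕ} (hp : p.Monic) (hd : p.natDegree = m)
    (δ : Fin m → ℝ) (hinj : Function.Injective δ) (hroot : ∀ i, p.IsRoot (δ i)) :
    p = ∏ i : Fin m, (X - C (δ i)) := by
  have hp0 : p ≠ 0 := hp.ne_zero
  set S : Finset ℝ := Finset.image δ Finset.univ with hS
  have hsub : S ⊆ p.roots.toFinset := by
    intro x hx
    rw [hS, Finset.mem_image] at hx
    obtain ⟨i, _, rfl⟩ := hx
    rw [Multiset.mem_toFinset, mem_roots hp0]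
    exact hroot i
  have hScard : S.card = m := by
    rw [hS, Finset.card_image_of_injective _ hinj, Finset.card_univ, Fintype.card_fin]
  have h1 : m ≤ p.roots.toFinset.card := hScard ▸ Finset.card_le_card hsub
  have h2 : p.roots.toFinset.card ≤ Multiset.card p.roots := Multiset.toFinset_card_le _
  have h3 : Multiset.card p.roots ≤ m := hd ▸ p.card_roots'
  have hcard : Multiset.card p.roots = m := le_antisymm h3 (h1.trans h2)
  have hnodup : p.roots.Nodup := by
    rw [← Multiset.toFinset_card_eq_card_iff_nodup]; omega
  have hfin : p.roots.toFinset = S :=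
    (Finset.eq_of_subset_of_card_le hsub (by omega)).symm
  have hroots : p.roots = S.val := by
    rw [← hfin, Multiset.toFinset_val, Multiset.dedup_eq_self.2 hnodup]
  have := prod_multiset_X_sub_C_of_monic_of_roots_card_eq hp (by omega)
  rw [← this, hroots]
  rw [hS]
  rw [← Finset.prod_eq_multiset_prod]
  rw [Finset.prod_image (fun a _ b _ h => hinj h)]

lemma bellPoly_one : bellPoly 1 = X - C 0 := by
  have h0 : stirling2 1 0 = 0 := rfl
  have h1 : stirling2 1 1 = 1 := rfl
  simp [bellPoly, Finset.sum_range_succ, h0, h1]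

lemma key (n : ℕ) : ∃ γ : Fin (n+1) → ℝ, StrictMono γ ∧ γ (Fin.last n) = 0 ∧
    bellPoly (n+1) = ∏ i : Fin (n+1), (X - C (γ i)) := by
  induction n with
  | zero =>
    refine ⟨fun _ => 0, ?_, rfl, ?_⟩
    · intro i j h
      rw [Fin.lt_def] at h
      have := i.isLt; have := j.isLt
      omega
    · simpa using bellPoly_one
  | succ n ih =>
    obtain ⟨γ, hmono, hlast, hfac⟩ := ih
    set B := bellPoly (n+1) with hB
    set g := B + derivative B with hg
    have hγle : ∀ i, γ i ≤ 0 := fun i => hlast ▸ hmono.monotone (Fin.le_last i)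
    have hBmonic : B.Monic := hfac ▸ monic_prod_of_monic _ _ (fun i _ => monic_X_sub_C _)
    have hBdeg : B.natDegree = n+1 := by
      rw [hfac, natDegree_prod_of_monic _ _ (fun i _ => monic_X_sub_C _)]
      simp
    have hB0 : B ≠ 0 := hBmonic.ne_zero
    have hdlt : (derivative B).degree < B.degree := degree_derivative_lt hB0
    have hgmonic : g.Monic := hBmonic.add_of_left hdlt
    have hgdeg : g.natDegree = n+1 := by
      rw [hg, natDegree_eq_of_degree_eq (degree_add_eq_left_of_degree_lt hdlt), hBdeg]
    have hroot : ∀ i, B.IsRoot (γ i) := by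
      intro i
      rw [hfac, IsRoot, eval_prod]
      exact Finset.prod_eq_zero (Finset.mem_univ i) (by simp)
    have hDer : ∀ x : ℝ, HasDerivAt (fun x => Real.exp x * eval x B)
        (Real.exp x * eval x g) x := by
      intro x
      have h := (Real.hasDerivAt_exp x).mul (B.hasDerivAt x)
      refine h.congr_deriv ?_
      rw [hg, eval_add]
      ring
    -- Rolle roots between consecutive roots of B
    have hmid : ∀ i : Fin n, ∃ c ∈ Ioo (γ i.castSucc) (γ i.succ), eval c g = 0 := by
      intro i
      have hlt : γ i.castSucc < γ i.succ := hmono i.castSucc_lt_succ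
      obtain ⟨c, hc, hc0⟩ := exists_hasDerivAt_eq_zero hlt
        (Continuous.continuousOn (by fun_prop))
        (show Real.exp (γ i.castSucc) * eval (γ i.castSucc) B
          = Real.exp (γ i.succ) * eval (γ i.succ) B by
          rw [hroot i.castSucc, hroot i.succ, mul_zero, mul_zero])
        (fun x _ => hDer x)
      exact ⟨c, hc, by
        rcases mul_eq_zero.1 hc0 with h | h
        · exact absurd h (Real.exp_ne_zero c)
        · exact h⟩
    -- the leftmost root, via IVT
    have hleft : ∃ c < γ 0, eval c g = 0 := by
      -- B = (X - C (γ 0)) * Q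
      set Q : ℝ[X] := ∏ i : Fin n, (X - C (γ i.succ)) with hQ
      have hBQ : B = (X - C (γ 0)) * Q := by
        rw [hfac, Fin.prod_univ_succ]
      have hgval : eval (γ 0) g = eval (γ 0) Q := by
        rw [hg, eval_add, hroot 0, zero_add, hBQ, derivative_mul, eval_add, eval_mul,
          eval_mul]
        simp
      have hQval : (-1:ℝ)^n * eval (γ 0) Q = ∏ i : Fin n, (γ i.succ - γ 0) := by
        rw [hQ, eval_prod,
          show ((-1:ℝ))^n = ∏ _i : Fin n, (-1:ℝ) by simp, ← Finset.prod_mul_distrib]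
        refine Finset.prod_congr rfl fun i _ => by simp only [eval_sub, eval_X, eval_C]; ring
      have hQpos : 0 < ∏ i : Fin n, (γ i.succ - γ 0) :=
        Finset.prod_pos fun i _ => sub_pos.2 (hmono (Fin.succ_pos i))
      have hsign : (-1:ℝ)^(n+1) * eval (γ 0) g < 0 := by
        rw [hgval, pow_succ]
        nlinarith [hQval, hQpos]
      -- behavior at -infinity
      set q : ℝ[X] := C ((-1:ℝ)^(n+1)) * (g.comp (-X)) with hq
      have hgcomp_deg : (g.comp (-X)).natDegree = n + 1 := by
        rw [natDegree_comp]
        simp [hgdeg]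
      have hqne : ((-1:ℝ)^(n+1)) ≠ 0 := by positivity
      have hqdeg : q.natDegree = n + 1 := by
        rw [hq, natDegree_C_mul hqne, hgcomp_deg]
      have hqlc : q.leadingCoeff = 1 := by
        rw [hq, leadingCoeff_mul, leadingCoeff_C,
          leadingCoeff_comp (by simp : (-X : ℝ[X]).natDegree ≠ 0), hgmonic.leadingCoeff,
          hgdeg]
        simp [← pow_add]
      have hq0 : q ≠ 0 := fun h => by simp [h] at hqlc
      have hqdegpos : 0 < q.degree := by
        rw [degree_eq_natDegree hq0, hqdeg]
        exact_mod_cast Nat.succ_pos n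
      have htend : Tendsto (fun x => eval x q) atTop atTop :=
        q.tendsto_atTop_of_leadingCoeff_nonneg hqdegpos (by rw [hqlc]; norm_num)
      obtain ⟨y, hy1, hy2⟩ :=
        ((htend.eventually_gt_atTop 0).and (eventually_gt_atTop (-γ 0))).exists
      have hx0 : -y < γ 0 := by linarith
      have hqy : eval y q = (-1:ℝ)^(n+1) * eval (-y) g := by
        rw [hq, eval_mul, eval_C, eval_comp]
        simp
      have hpos : 0 < (-1:ℝ)^(n+1) * eval (-y) g := by rw [← hqy]; exact hy1
      -- IVT
      have hcont : ContinuousOn (fun x => (-1:ℝ)^(n+1) * eval x g) (Icc (-y) (γ 0)) :=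
        (continuous_const.mul g.continuous).continuousOn
      have := intermediate_value_Ioo' (le_of_lt hx0) hcont
      have h0mem : (0:ℝ) ∈ Ioo ((fun x => (-1:ℝ)^(n+1) * eval x g) (γ 0))
          ((fun x => (-1:ℝ)^(n+1) * eval x g) (-y)) := ⟨hsign, hpos⟩
      obtain ⟨c, hc, hc0⟩ := this h0mem
      refine ⟨c, hc.2, ?_⟩
      have : (-1:ℝ)^(n+1) * eval c g = 0 := hc0
      rcases mul_eq_zero.1 this with h | h
      · exact absurd h hqne
      · exact h
    -- assemble the n+2 roots of B_{n+2} = X * g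
    obtain ⟨c₀, hc₀lt, hc₀⟩ := hleft
    choose c hcmem hcroot using hmid
    set δ : Fin (n+1) → ℝ := Fin.cases c₀ c with hδ
    have hδ0 : δ 0 = c₀ := rfl
    have hδsucc : ∀ i : Fin n, δ i.succ = c i := fun i => by simp [hδ]
    have hlt1 : ∀ j : Fin (n+1), δ j < γ j := by
      intro j
      induction j using Fin.cases with
      | zero => simpa [hδ0] using hc₀lt
      | succ i => rw [hδsucc i]; exact (hcmem i).2
    have hlt2 : ∀ i : Fin n, γ i.castSucc < δ i.succ := by
      intro i; rw [hδsucc i]; exact (hcmem i).1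
    have hδmono : StrictMono δ := by
      intro a b hab
      have hbne : b ≠ 0 := Fin.pos_iff_ne_zero.mp (lt_of_le_of_lt (Fin.zero_le a) hab)
      obtain ⟨i, rfl⟩ := Fin.exists_succ_eq.2 hbne
      have hale : a ≤ i.castSucc := Fin.le_castSucc_iff.2 hab
      calc δ a < γ a := hlt1 a
        _ ≤ γ i.castSucc := hmono.monotone hale
        _ < δ i.succ := hlt2 i
    have hδneg : ∀ j, δ j < 0 := fun j => lt_of_lt_of_le (hlt1 j) (hγle j)
    have hδroot : ∀ j, g.IsRoot (δ j) := by
      intro j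
      induction j using Fin.cases with
      | zero => exact hc₀
      | succ i => rw [hδsucc i]; exact hcroot i
    have hgfac : g = ∏ j : Fin (n+1), (X - C (δ j)) :=
      factor_of_roots hgmonic hgdeg δ hδmono.injective hδroot
    -- snoc 0
    refine ⟨Fin.snoc δ 0, ?_, ?_, ?_⟩
    · intro a b hab
      induction b using Fin.lastCases with
      | last =>
        have hane : a ≠ Fin.last (n+1) := ne_of_lt hab
        obtain ⟨j, rfl⟩ := Fin.exists_castSucc_eq.2 hane
        rw [Fin.snoc_castSucc, Fin.snoc_last]
        exact hδneg j
      | cast k =>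
        have halt : a < Fin.last (n+1) := lt_of_lt_of_le hab k.castSucc.le_last
        obtain ⟨j, rfl⟩ := Fin.exists_castSucc_eq.2 (ne_of_lt halt)
        rw [Fin.snoc_castSucc, Fin.snoc_castSucc]
        exact hδmono (by exact_mod_cast hab)
    · exact Fin.snoc_last _ _
    · rw [bellPoly_rec (n+1), ← hB, ← hg, Fin.prod_univ_castSucc]
      simp only [Fin.snoc_castSucc, Fin.snoc_last]
      rw [← hgfac]
      simp [mul_comm]

theorem stmt_12 (n : ℕ) (hn : 1 ≤ n) :
    ∃ γ : Fin n → ℝ, StrictMono γ ∧ (∀ i, γ i ≤ 0) ∧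
      bellPoly n = Polynomial.C (bellPoly n).leadingCoeff *
        ∏ i : Fin n, (Polynomial.X - Polynomial.C (γ i)) := by
  obtain ⟨m, rfl⟩ : ∃ m, n = m + 1 := ⟨n - 1, (Nat.succ_pred_eq_of_pos hn).symm⟩
  obtain ⟨γ, hmono, hlast, hfac⟩ := key m
  have hmonic : (bellPoly (m + 1)).Monic :=
    hfac ▸ monic_prod_of_monic _ _ (fun i _ => monic_X_sub_C _)
  refine ⟨γ, hmono, fun i => hlast ▸ hmono.monotone (Fin.le_last i), ?_⟩
  rw [hmonic.leadingCoeff, map_one, one_mul]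
  exact hfac
end

section
/- Let {P_n} be a sequence of real polynomials with P_0 = 1, deg P_n = n, satisfying P_{n+1}(x) = κ_n(1−x²)P_n'(x) − 2κ_n r_n x P_n(x) with r_n > 0 and κ_n ≠ 0 for all n, and suppose the zero of P_1 lies in (−1, 1). Then for every n ≥ 1, all zeros of P_n are real, simple, lie in (−1, 1), and the zeros of P_n and P_{n+1} interlace. -/
open Polynomial Set

-- snoc of a strictly monotone tuple with a larger element is strictly monotone
lemma aux_snoc_strictMono {n : ℕ} {γ : Fin n → ℝ} {a : ℝ}
    (h : StrictMono γ) (ha : ∀ i, γ i < a) : StrictMono (Fin.snoc γ a) := by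
  intro i j hij
  obtain ⟨i', rfl⟩ := Fin.exists_castSucc_eq.mpr (Fin.ne_last_of_lt hij)
  rcases eq_or_ne j (Fin.last n) with rfl | hj
  · simpa using ha i'
  · obtain ⟨j', rfl⟩ := Fin.exists_castSucc_eq.mpr hj
    simpa using h (Fin.castSucc_lt_castSucc_iff.mp hij)

lemma aux_cons_strictMono {n : ℕ} {f : Fin (n+1) → ℝ} {a : ℝ}
    (h : StrictMono f) (ha : a < f 0) : StrictMono (Fin.cons a f : Fin (n+2) → ℝ) := by
  intro i j hij
  rcases Fin.eq_zero_or_eq_succ i with rfl | ⟨i', rfl⟩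
  · rcases Fin.eq_zero_or_eq_succ j with rfl | ⟨j', rfl⟩
    · exact absurd hij (lt_irrefl _)
    · simp only [Fin.cons_zero, Fin.cons_succ]
      exact lt_of_lt_of_le ha (h.monotone (Fin.zero_le _))
  · rcases Fin.eq_zero_or_eq_succ j with rfl | ⟨j', rfl⟩
    · exact absurd hij (by simp [Fin.lt_def])
    · simp only [Fin.cons_succ]
      exact h (Fin.succ_lt_succ_iff.mp hij)

lemma aux_key (n : ℕ) (p q : Polynomial ℝ) (κ r : ℝ) (hκ : κ ≠ 0) (hr : 0 < r)
    (hq : q = Polynomial.C κ * (1 - Polynomial.X ^ 2) * derivative p -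
        Polynomial.C (2 * κ * r) * Polynomial.X * p)
    (hdq : q.degree = (n + 1 : ℕ))
    (γ : Fin n → ℝ) (hmono : StrictMono γ) (hIoo : ∀ i, γ i ∈ Ioo (-1 : ℝ) 1)
    (hfac : p = Polynomial.C p.leadingCoeff * ∏ i : Fin n, (Polynomial.X - Polynomial.C (γ i))) :
    ∃ δ : Fin (n + 1) → ℝ, StrictMono δ ∧ (∀ i, δ i ∈ Ioo (-1 : ℝ) 1) ∧
      q = Polynomial.C q.leadingCoeff * ∏ i : Fin (n + 1), (Polynomial.X - Polynomial.C (δ i)) ∧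
      ∀ i : Fin n, δ i.castSucc < γ i ∧ γ i < δ i.succ := by
  -- the auxiliary function g(x) = (1-x^2)^r * p(x)
  set g : ℝ → ℝ := fun x => (1 - x ^ 2) ^ r * p.eval x with hg
  -- the nodes: -1, γ 0, ..., γ (n-1), 1
  set b : Fin (n + 2) → ℝ := Fin.cons (-1) (Fin.snoc γ 1) with hb
  have hsnoc_mono : StrictMono (Fin.snoc γ 1 : Fin (n+1) → ℝ) :=
    aux_snoc_strictMono hmono (fun i => (hIoo i).2)
  have hsnoc_gt : ∀ k : Fin (n+1), (-1 : ℝ) < (Fin.snoc γ 1 : Fin (n+1) → ℝ) k := by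
    intro k
    refine Fin.lastCases ?_ ?_ k
    · rw [Fin.snoc_last]; norm_num
    · intro j; rw [Fin.snoc_castSucc]; exact (hIoo j).1
  have hbmono : StrictMono b := aux_cons_strictMono hsnoc_mono (hsnoc_gt 0)
  have hbmem : ∀ i, b i ∈ Icc (-1 : ℝ) 1 := by
    intro i
    rcases Fin.eq_zero_or_eq_succ i with rfl | ⟨k, rfl⟩
    · simp [hb]
    · rw [hb, Fin.cons_succ]
      rcases Fin.eq_castSucc_or_eq_last k with ⟨k', rfl⟩ | rfl
      · rw [Fin.snoc_castSucc]
        exact ⟨(hIoo k').1.le, (hIoo k').2.le⟩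
      · rw [Fin.snoc_last]; norm_num
  have hproot : ∀ i : Fin n, p.eval (γ i) = 0 := by
    intro i
    rw [hfac]
    simp only [eval_mul, eval_prod, eval_sub, eval_X, eval_C]
    rw [Finset.prod_eq_zero (Finset.mem_univ i) (by ring)]
    ring
  have hgb : ∀ i, g (b i) = 0 := by
    intro i
    rcases Fin.eq_zero_or_eq_succ i with rfl | ⟨k, rfl⟩
    · have : b 0 = -1 := rfl
      rw [this]
      simp only [hg]
      norm_num [Real.zero_rpow hr.ne']
    · rw [hb, Fin.cons_succ]
      rcases Fin.eq_castSucc_or_eq_last k with ⟨k', rfl⟩ | rfl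
      · rw [Fin.snoc_castSucc]
        simp [hg, hproot k']
      · rw [Fin.snoc_last]
        simp only [hg]
        norm_num [Real.zero_rpow hr.ne']
  have hgcont : Continuous g := by
    apply Continuous.mul ?_ p.continuous
    rw [continuous_iff_continuousAt]
    intro x
    exact ContinuousAt.rpow_const (by fun_prop) (Or.inr hr.le)
  -- derivative of g on (-1,1)
  have hderiv : ∀ x ∈ Ioo (-1 : ℝ) 1,
      HasDerivAt g ((1 - x ^ 2) ^ (r - 1) * (q.eval x / κ)) x := by
    intro x hx
    have hv : 0 < 1 - x ^ 2 := by nlinarith [hx.1, hx.2]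
    have h1 : HasDerivAt (fun x : ℝ => 1 - x ^ 2) (-(2 * x)) x := by
      simpa using ((hasDerivAt_pow 2 x).const_sub 1)
    have h2 : HasDerivAt (fun x : ℝ => (1 - x ^ 2) ^ r)
        (-(2 * x) * r * (1 - x ^ 2) ^ (r - 1)) x :=
      h1.rpow_const (Or.inl hv.ne')
    have h3 : HasDerivAt (fun x => p.eval x) ((derivative p).eval x) x := p.hasDerivAt x
    have h4 := h2.mul h3
    refine h4.congr_deriv ?_
    symm
    have hsplit : (1 - x ^ 2) ^ r = (1 - x ^ 2) ^ (r - 1) * (1 - x ^ 2) := by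
      nth_rewrite 1 [show r = (r - 1) + 1 by ring]
      rw [Real.rpow_add hv, Real.rpow_one]
    have heq : q.eval x = κ * (1 - x ^ 2) * (derivative p).eval x
        - 2 * κ * r * x * p.eval x := by
      rw [hq]; simp
    rw [heq, hsplit]
    field_simp
    ring
  -- Rolle on each interval
  have hroot : ∀ i : Fin (n + 1),
      ∃ c ∈ Ioo (b i.castSucc) (b i.succ), q.eval c = 0 := by
    intro i
    have hab : b i.castSucc < b i.succ := hbmono Fin.castSucc_lt_succ
    have hsub : Ioo (b i.castSucc) (b i.succ) ⊆ Ioo (-1 : ℝ) 1 :=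
      Ioo_subset_Ioo (hbmem _).1 (hbmem _).2
    obtain ⟨c, hc, hD⟩ := exists_hasDerivAt_eq_zero hab hgcont.continuousOn
      (by rw [hgb, hgb]) (fun x hx => hderiv x (hsub hx))
    refine ⟨c, hc, ?_⟩
    have hc' := hsub hc
    have hv : 0 < 1 - c ^ 2 := by nlinarith [hc'.1, hc'.2]
    have hpow : (1 - c ^ 2) ^ (r - 1) ≠ 0 := (Real.rpow_pos_of_pos hv _).ne'
    rcases mul_eq_zero.mp hD with h | h
    · exact absurd h hpow
    · rcases div_eq_zero_iff.mp h with h | h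
      · exact h
      · exact absurd h hκ
  choose δ hδmem hδroot using hroot
  have hδlo : ∀ i, b i.castSucc < δ i := fun i => (hδmem i).1
  have hδhi : ∀ i, δ i < b i.succ := fun i => (hδmem i).2
  have hδmono : StrictMono δ := by
    intro i j hij
    calc δ i < b i.succ := hδhi i
    _ ≤ b j.castSucc := hbmono.monotone (by
        rw [Fin.le_def]
        simp only [Fin.val_succ, Fin.coe_castSucc]
        exact Nat.succ_le_of_lt hij)
    _ < δ j := hδlo j
  have hδIoo : ∀ i, δ i ∈ Ioo (-1 : ℝ) 1 := by
    intro i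
    exact ⟨lt_of_le_of_lt (hbmem i.castSucc).1 (hδlo i),
      lt_of_lt_of_le (hδhi i) (hbmem i.succ).2⟩
  -- interlacing
  have hint : ∀ i : Fin n, δ i.castSucc < γ i ∧ γ i < δ i.succ := by
    intro i
    have e1 : b i.castSucc.succ = γ i := by
      rw [hb, Fin.cons_succ, Fin.snoc_castSucc]
    have e2 : b i.succ.castSucc = γ i := by
      rw [← Fin.succ_castSucc, hb, Fin.cons_succ, Fin.snoc_castSucc]
    exact ⟨e1 ▸ hδhi i.castSucc, e2 ▸ hδlo i.succ⟩
  -- factorization of q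
  have hqne : q ≠ 0 := by
    intro h
    rw [h, degree_zero] at hdq
    exact WithBot.bot_ne_coe (by exact_mod_cast hdq)
  have hqnat : q.natDegree = n + 1 := natDegree_eq_of_degree_eq_some hdq
  have hδinj : Function.Injective δ := hδmono.injective
  set Q : Polynomial ℝ := ∏ i : Fin (n + 1), (Polynomial.X - Polynomial.C (δ i)) with hQ
  have hQmonic : Q.Monic := monic_prod_of_monic _ _ (fun i _ => monic_X_sub_C _)
  have hQdeg : Q.natDegree = n + 1 := by
    rw [hQ, natDegree_prod _ _ (fun i _ => X_sub_C_ne_zero (δ i))]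
    simp
  have hQroot : ∀ i, Q.eval (δ i) = 0 := by
    intro i
    rw [hQ, eval_prod]
    exact Finset.prod_eq_zero (Finset.mem_univ i) (by simp)
  set R : Polynomial ℝ := q - Polynomial.C q.leadingCoeff * Q with hR
  have hRdeg : R.degree < ((n + 1 : ℕ) : WithBot ℕ) := by
    rw [degree_lt_iff_coeff_zero]
    intro m hm
    rw [hR, coeff_sub, coeff_C_mul]
    rcases eq_or_lt_of_le hm with heq | hm'
    · have h1 : q.coeff m = q.leadingCoeff := by
        rw [← heq, Polynomial.leadingCoeff, hqnat]
      have h2 : Q.coeff m = 1 := by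
        rw [← heq, ← hQdeg, hQmonic.coeff_natDegree]
      rw [h1, h2]; ring
    · have h1 : q.coeff m = 0 := coeff_eq_zero_of_natDegree_lt (by omega)
      have h2 : Q.coeff m = 0 := coeff_eq_zero_of_natDegree_lt (by omega)
      rw [h1, h2]; ring
  have hRroot : ∀ i, R.eval (δ i) = 0 := by
    intro i
    rw [hR, eval_sub, eval_mul, eval_C, hQroot, hδroot]
    ring
  have hR0 : R = 0 := by
    by_contra hR0
    have hcard : (Finset.univ.image δ).card ≤ R.natDegree := by
      calc (Finset.univ.image δ).card ≤ R.roots.toFinset.card := by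
            apply Finset.card_le_card
            intro x hx
            obtain ⟨i, _, rfl⟩ := Finset.mem_image.mp hx
            rw [Multiset.mem_toFinset, mem_roots hR0]
            exact hRroot i
      _ ≤ Multiset.card R.roots := R.roots.toFinset_card_le
      _ ≤ R.natDegree := R.card_roots'
    rw [Finset.card_image_of_injective _ hδinj, Finset.card_univ, Fintype.card_fin] at hcard
    have : R.natDegree < n + 1 := (natDegree_lt_iff_degree_lt hR0).mpr hRdeg
    omega
  have hfacq : q = Polynomial.C q.leadingCoeff * Q := by
    have := sub_eq_zero.mp hR0
    exact this
  exact ⟨δ, hδmono, hδIoo, hfacq, hint⟩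

theorem stmt_15 (P : ℕ → Polynomial ℝ) (κ r : ℕ → ℝ)
    (hκ : ∀ n, κ n ≠ 0) (hr : ∀ n, 0 < r n)
    (hP0 : P 0 = 1)
    (hdeg : ∀ n, (P n).degree = n)
    (hrec : ∀ n, P (n + 1) =
      Polynomial.C (κ n) * (1 - Polynomial.X ^ 2) * derivative (P n) -
        Polynomial.C (2 * κ n * r n) * Polynomial.X * P n)
    (hP1 : ∀ x : ℝ, (P 1).IsRoot x → x ∈ Ioo (-1 : ℝ) 1) :
    ∀ n : ℕ, 1 ≤ n →
      ∃ γ : Fin n → ℝ, ∃ δ : Fin (n + 1) → ℝ,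
        StrictMono γ ∧ StrictMono δ ∧
        (∀ i, γ i ∈ Ioo (-1 : ℝ) 1) ∧ (∀ i, δ i ∈ Ioo (-1 : ℝ) 1) ∧
        P n = Polynomial.C (P n).leadingCoeff *
          ∏ i : Fin n, (Polynomial.X - Polynomial.C (γ i)) ∧
        P (n + 1) = Polynomial.C (P (n + 1)).leadingCoeff *
          ∏ i : Fin (n + 1), (Polynomial.X - Polynomial.C (δ i)) ∧
        (∀ i : Fin n, δ i.castSucc < γ i ∧ γ i < δ i.succ) := by
  have fact : ∀ n : ℕ, ∃ γ : Fin n → ℝ, StrictMono γ ∧ (∀ i, γ i ∈ Ioo (-1 : ℝ) 1) ∧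
      P n = Polynomial.C (P n).leadingCoeff *
        ∏ i : Fin n, (Polynomial.X - Polynomial.C (γ i)) := by
    intro n
    induction n with
    | zero =>
      refine ⟨Fin.elim0, fun i => i.elim0, fun i => i.elim0, ?_⟩
      simp [hP0]
    | succ n ih =>
      obtain ⟨γ, h1, h2, h3⟩ := ih
      obtain ⟨δ, hd1, hd2, hd3, _⟩ := aux_key n (P n) (P (n + 1)) (κ n) (r n)
        (hκ n) (hr n) (hrec n) (hdeg (n + 1)) γ h1 h2 h3
      exact ⟨δ, hd1, hd2, hd3⟩
  intro n _
  obtain ⟨γ, h1, h2, h3⟩ := fact n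
  obtain ⟨δ, hd1, hd2, hd3, hd4⟩ := aux_key n (P n) (P (n + 1)) (κ n) (r n)
    (hκ n) (hr n) (hrec n) (hdeg (n + 1)) γ h1 h2 h3
  exact ⟨γ, δ, h1, hd1, h2, hd2, h3, hd3, hd4⟩
end

section
/- The Hermite polynomials H_n satisfy H_{n+1}(x) = −H_n'(x) + 2x H_n(x), and equivalently H_{n+1}(x) = −e^{x²}(d/dx)[e^{−x²} H_n(x)]; consequently for every n ≥ 1 the zeros of H_n are real and simple and the zeros of H_n and H_{n+1} strictly interlace. -/
open Polynomial
open Filter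

/-- The physicists' Hermite polynomials: `H 0 = 1`,
`H (n+1) = 2x·H n − H n'`. -/
noncomputable def hermitePhys : ℕ → Polynomial ℝ
  | 0 => 1
  | n + 1 => Polynomial.C 2 * Polynomial.X * hermitePhys n - derivative (hermitePhys n)

lemma hermite_deg_coeff (n : ℕ) :
    (hermitePhys n).natDegree = n ∧ (hermitePhys n).coeff n = 2 ^ n := by
  induction n with
  | zero => simp [hermitePhys]
  | succ n ih =>
    obtain ⟨hd, hc⟩ := ih
    have hne : hermitePhys n ≠ 0 := fun h => by
      rw [h] at hc; simp at hc; exact absurd hc.symm (by positivity)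
    have hcoeff : (hermitePhys (n+1)).coeff (n+1) = 2 ^ (n+1) := by
      have h1 : (Polynomial.C 2 * Polynomial.X * hermitePhys n).coeff (n+1)
          = 2 * (hermitePhys n).coeff n := by
        rw [mul_assoc, coeff_C_mul, coeff_X_mul]
      have h2 : (derivative (hermitePhys n)).coeff (n+1) = 0 := by
        rw [coeff_derivative]
        have : (hermitePhys n).coeff (n+1+1) = 0 :=
          coeff_eq_zero_of_natDegree_lt (by omega)
        simp [this]
      show (Polynomial.C 2 * Polynomial.X * hermitePhys n
          - derivative (hermitePhys n)).coeff (n+1) = _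
      rw [coeff_sub, h1, h2, hc]; ring
    have hle : (hermitePhys (n+1)).natDegree ≤ n + 1 := by
      show (Polynomial.C 2 * Polynomial.X * hermitePhys n
          - derivative (hermitePhys n)).natDegree ≤ n + 1
      refine (natDegree_sub_le _ _).trans (max_le ?_ ?_)
      · refine (natDegree_mul_le).trans ?_
        have : (Polynomial.C (2:ℝ) * Polynomial.X).natDegree ≤ 1 :=
          (natDegree_mul_le).trans (by simp)
        omega
      · exact (natDegree_derivative_le _).trans (by omega)
    have hge : n + 1 ≤ (hermitePhys (n+1)).natDegree :=
      le_natDegree_of_ne_zero (by rw [hcoeff]; positivity)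
    exact ⟨le_antisymm hle hge, hcoeff⟩

lemma hermite_natDegree (n : ℕ) : (hermitePhys n).natDegree = n := (hermite_deg_coeff n).1

lemma hermite_leadingCoeff (n : ℕ) : (hermitePhys n).leadingCoeff = 2 ^ n := by
  rw [leadingCoeff, hermite_natDegree]; exact (hermite_deg_coeff n).2

lemma hermite_ne_zero (n : ℕ) : hermitePhys n ≠ 0 := by
  intro h
  have := hermite_leadingCoeff n
  rw [h] at this
  simp at this
  exact absurd this.symm (by positivity)

lemma part2 (n : ℕ) (x : ℝ) : (hermitePhys (n + 1)).eval x =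
    -Real.exp (x ^ 2) * deriv (fun y => Real.exp (-y ^ 2) * (hermitePhys n).eval y) x := by
  have h1 : HasDerivAt (fun y : ℝ => Real.exp (-y ^ 2)) (Real.exp (-x^2) * (-(2*x))) x := by
    have : HasDerivAt (fun y : ℝ => -y ^ 2) (-(2*x)) x := by
      simpa using ((hasDerivAt_pow 2 x)).fun_neg
    simpa using this.exp
  have h2 : HasDerivAt (fun y : ℝ => (hermitePhys n).eval y)
      ((derivative (hermitePhys n)).eval x) x := (hermitePhys n).hasDerivAt x
  have h3 := h1.fun_mul h2
  rw [h3.deriv]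
  have hrec : (hermitePhys (n+1)).eval x
      = 2 * x * (hermitePhys n).eval x - (derivative (hermitePhys n)).eval x := by
    show ((Polynomial.C 2 * Polynomial.X * hermitePhys n
        - derivative (hermitePhys n))).eval x = _
    simp
  rw [hrec]
  have hexp : Real.exp (x^2) * Real.exp (-x^2) = 1 := by
    rw [← Real.exp_add]; simp
  linear_combination (eval x (derivative (hermitePhys n)) - 2*x*eval x (hermitePhys n)) * hexp

lemma exists_b (p : ℝ[X]) (hd : 0 < p.natDegree) (hlc : 0 < p.leadingCoeff) (M : ℝ) :
    ∃ b : ℝ, M < b ∧ 0 < p.eval b := by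
  have ht := p.tendsto_atTop_of_leadingCoeff_nonneg
    (natDegree_pos_iff_degree_pos.mp hd) hlc.le
  obtain ⟨b, hb⟩ := ((ht.eventually_gt_atTop 0).and (eventually_gt_atTop M)).exists
  exact ⟨b, hb.2, hb.1⟩

lemma exists_a (p : ℝ[X]) (hd : 0 < p.natDegree) (hlc : 0 < p.leadingCoeff) (M : ℝ) :
    ∃ a : ℝ, a < M ∧ 0 < (-1 : ℝ) ^ p.natDegree * p.eval a := by
  set d := p.natDegree with hdd
  set q : ℝ[X] := Polynomial.C ((-1 : ℝ) ^ d) * p.comp (-Polynomial.X) with hq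
  have hnX : (-Polynomial.X : ℝ[X]).natDegree = 1 := by simp
  have hcompdeg : (p.comp (-Polynomial.X)).natDegree = d := by
    rw [natDegree_comp, hnX, mul_one]
  have hsq : ((-1 : ℝ) ^ d) * ((-1 : ℝ) ^ d) = 1 := by
    rw [← pow_add, ← two_mul, pow_mul]; norm_num
  have hlcq : q.leadingCoeff = p.leadingCoeff := by
    rw [hq, leadingCoeff_mul, leadingCoeff_C,
      leadingCoeff_comp (by rw [hnX]; norm_num)]
    have h1 : (-Polynomial.X : ℝ[X]).leadingCoeff = -1 := by simp
    rw [h1, ← hdd]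
    nlinarith [hsq]
  have hqdeg : q.natDegree = d := by
    rw [hq, natDegree_C_mul (by positivity), hcompdeg]
  obtain ⟨x, hx, hx0⟩ := exists_b q (by rw [hqdeg]; exact hd)
    (by rw [hlcq]; exact hlc) (-M)
  refine ⟨-x, by linarith, ?_⟩
  have : q.eval x = (-1 : ℝ) ^ d * p.eval (-x) := by
    rw [hq]; simp [eval_comp]
  rw [← this]; exact hx0

lemma hermite_lc_pos (n : ℕ) : 0 < (hermitePhys n).leadingCoeff := by
  rw [hermite_leadingCoeff]; positivity

lemma sign_at_root (n : ℕ) (γ : Fin n → ℝ) (hγ : StrictMono γ)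
    (hfac : hermitePhys n = Polynomial.C (hermitePhys n).leadingCoeff *
      ∏ j : Fin n, (Polynomial.X - Polynomial.C (γ j))) (i : Fin n) :
    0 < (-1 : ℝ) ^ (n + (i : ℕ)) * (hermitePhys (n + 1)).eval (γ i) := by
  set c := (hermitePhys n).leadingCoeff with hcdef
  have hc : 0 < c := hermite_lc_pos n
  set Q : ℝ[X] := ∏ j ∈ Finset.univ.erase i, (Polynomial.X - Polynomial.C (γ j)) with hQdef
  have hsplit : (∏ j : Fin n, (Polynomial.X - Polynomial.C (γ j)))
      = (Polynomial.X - Polynomial.C (γ i)) * Q :=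
    (Finset.mul_prod_erase _ _ (Finset.mem_univ i)).symm
  have hH0 : (hermitePhys n).eval (γ i) = 0 := by rw [hfac, hsplit]; simp
  have hder : (derivative (hermitePhys n)).eval (γ i) = c * Q.eval (γ i) := by
    conv_lhs => rw [hfac, hsplit]
    rw [derivative_mul, derivative_mul, derivative_C, derivative_sub, derivative_X, derivative_C]
    simp
  have heval : (hermitePhys (n + 1)).eval (γ i) = -(c * Q.eval (γ i)) := by
    show ((Polynomial.C 2 * Polynomial.X * hermitePhys n)
        - derivative (hermitePhys n)).eval (γ i) = _
    rw [eval_sub, eval_mul, hH0, hder]; ring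
  have hQ : Q.eval (γ i) = ∏ j ∈ Finset.univ.erase i, (γ i - γ j) := by
    rw [hQdef, eval_prod]; simp
  have hset : Finset.univ.erase i = Finset.Iio i ∪ Finset.Ioi i := by
    ext j
    simp only [Finset.mem_erase, Finset.mem_univ, and_true, Finset.mem_union,
      Finset.mem_Iio, Finset.mem_Ioi]
    exact ne_iff_lt_or_gt
  have hdisj : Disjoint (Finset.Iio i) (Finset.Ioi i) :=
    Finset.disjoint_left.mpr fun j hj hj' =>
      lt_asymm (Finset.mem_Iio.mp hj) (Finset.mem_Ioi.mp hj')
  set A := ∏ j ∈ Finset.Iio i, (γ i - γ j) with hAdef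
  set B := ∏ j ∈ Finset.Ioi i, (γ j - γ i) with hBdef
  set k := n - 1 - (i : ℕ) with hkdef
  have hk : (Finset.Ioi i).card = k := Fin.card_Ioi i
  have hprod : (∏ j ∈ Finset.univ.erase i, (γ i - γ j)) = A * ((-1 : ℝ) ^ k * B) := by
    rw [hset, Finset.prod_union hdisj]
    congr 1
    calc (∏ j ∈ Finset.Ioi i, (γ i - γ j))
        = ∏ j ∈ Finset.Ioi i, ((-1) * (γ j - γ i)) := by
          apply Finset.prod_congr rfl; intros; ring
      _ = ((-1 : ℝ)) ^ (Finset.Ioi i).card * B := by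
          rw [Finset.prod_mul_distrib, Finset.prod_const]
      _ = (-1 : ℝ) ^ k * B := by rw [hk]
  have hA : 0 < A := Finset.prod_pos fun j hj => sub_pos.mpr (hγ (Finset.mem_Iio.mp hj))
  have hB : 0 < B := Finset.prod_pos fun j hj => sub_pos.mpr (hγ (Finset.mem_Ioi.mp hj))
  have hilt : (i : ℕ) < n := i.is_lt
  have hexp : (-1 : ℝ) ^ (n + (i : ℕ)) * (-1 : ℝ) ^ k = -1 := by
    rw [← pow_add]
    have hodd : Odd ((n + (i : ℕ)) + k) := ⟨n - 1, by omega⟩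
    exact hodd.neg_one_pow
  have key : (-1 : ℝ) ^ (n + (i : ℕ)) * -(c * (A * ((-1 : ℝ) ^ k * B))) = c * (A * B) := by
    linear_combination (-(c * (A * B))) * hexp
  rw [heval, hQ, hprod, key]
  exact mul_pos hc (mul_pos hA hB)

lemma key_s18 (n : ℕ) (γ : Fin n → ℝ) (hγ : StrictMono γ)
    (hfac : hermitePhys n = Polynomial.C (hermitePhys n).leadingCoeff *
      ∏ j : Fin n, (Polynomial.X - Polynomial.C (γ j))) :
    ∃ δ : Fin (n + 1) → ℝ, StrictMono δ ∧
      hermitePhys (n + 1) = Polynomial.C (hermitePhys (n + 1)).leadingCoeff *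
        ∏ i : Fin (n + 1), (Polynomial.X - Polynomial.C (δ i)) ∧
      ∀ i : Fin n, δ i.castSucc < γ i ∧ γ i < δ i.succ := by
  set p := hermitePhys (n + 1) with hpdef
  have hpd : p.natDegree = n + 1 := hermite_natDegree (n + 1)
  have hplc : 0 < p.leadingCoeff := hermite_lc_pos (n + 1)
  have s1 : ∀ i : Fin n, 0 < (-1 : ℝ) ^ (n + (i : ℕ)) * p.eval (γ i) :=
    sign_at_root n γ hγ hfac
  obtain ⟨Mb, hMb⟩ := Finite.exists_le γ
  obtain ⟨b, hbM, hpb⟩ := exists_b p (by omega) hplc Mb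
  have hγb : ∀ j, γ j < b := fun j => lt_of_le_of_lt (hMb j) hbM
  obtain ⟨Ma, hMa⟩ := Finite.exists_ge γ
  obtain ⟨a, haM, hpa'⟩ := exists_a p (by omega) hplc (min Ma b)
  have haγ : ∀ j, a < γ j := fun j =>
    lt_of_lt_of_le (lt_of_lt_of_le haM (min_le_left _ _)) (hMa j)
  have hab : a < b := lt_of_lt_of_le haM (min_le_right _ _)
  have hpa : 0 < (-1 : ℝ) ^ (n + 1) * p.eval a := by rwa [hpd] at hpa'
  set lo : Fin (n + 1) → ℝ := Fin.cons a γ with hlo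
  set hi : Fin (n + 1) → ℝ := Fin.snoc γ b with hhi
  have hA : ∀ i : Fin (n + 1), 0 < (-1 : ℝ) ^ (n + 1 + (i : ℕ)) * p.eval (lo i) := by
    intro i
    induction i using Fin.cases with
    | zero => simpa [hlo] using hpa
    | succ k =>
      have he : (-1 : ℝ) ^ (n + 1 + ((k : ℕ) + 1)) = (-1 : ℝ) ^ (n + (k : ℕ)) := by
        rw [show n + 1 + ((k : ℕ) + 1) = (n + (k : ℕ)) + 2 by omega, pow_add]; norm_num
      simpa [hlo, Fin.cons_succ, Fin.val_succ, he] using s1 k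
  have hB : ∀ i : Fin (n + 1), 0 < (-1 : ℝ) ^ (n + (i : ℕ)) * p.eval (hi i) := by
    intro i
    induction i using Fin.lastCases with
    | last =>
      have he : (-1 : ℝ) ^ (n + ((Fin.last n : Fin (n + 1)) : ℕ)) = 1 := by
        rw [Fin.val_last, ← two_mul, pow_mul]; norm_num
      rw [he, one_mul]
      simpa [hhi, Fin.snoc_last] using hpb
    | cast k => simpa [hhi, Fin.snoc_castSucc, Fin.coe_castSucc] using s1 k
  have hahi : ∀ i : Fin (n + 1), a < hi i := by
    intro i
    induction i using Fin.lastCases with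
    | last => simpa [hhi, Fin.snoc_last] using hab
    | cast k => simpa [hhi, Fin.snoc_castSucc] using haγ k
  have hγhi : ∀ (j : Fin (n + 1)) (m : Fin n), (m : ℕ) < (j : ℕ) → γ m < hi j := by
    intro j
    induction j using Fin.lastCases with
    | last => intro m _; simpa [hhi, Fin.snoc_last] using hγb m
    | cast k =>
      intro m hm
      rw [hhi]
      rw [Fin.snoc_castSucc]
      exact hγ (by rwa [Fin.lt_def, ← Fin.coe_castSucc k])
  have hlohi : ∀ i : Fin (n + 1), lo i < hi i := by
    intro i
    induction i using Fin.cases with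
    | zero => simpa [hlo] using hahi 0
    | succ k =>
      rw [hlo, Fin.cons_succ]
      exact hγhi k.succ k (by simp [Fin.val_succ])
  have hroot : ∀ i : Fin (n + 1), ∃ x, x ∈ Set.Ioo (lo i) (hi i) ∧ p.eval x = 0 := by
    intro i
    have h1 := hA i
    have h2 := hB i
    have hcont : ContinuousOn (fun x => p.eval x) (Set.Icc (lo i) (hi i)) :=
      (Polynomial.continuous p).continuousOn
    rcases Nat.even_or_odd (n + (i : ℕ)) with he | ho
    · have e1 : (-1 : ℝ) ^ (n + (i : ℕ)) = 1 := he.neg_one_pow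
      have e2 : (-1 : ℝ) ^ (n + 1 + (i : ℕ)) = -1 := by
        have hodd : Odd (n + 1 + (i : ℕ)) := by
          rcases he with ⟨r, hr⟩; exact ⟨r, by omega⟩
        exact hodd.neg_one_pow
      rw [e1, one_mul] at h2
      rw [e2] at h1
      have h1' : p.eval (lo i) < 0 := by linarith
      have hmem : (0 : ℝ) ∈ Set.Ioo (p.eval (lo i)) (p.eval (hi i)) := ⟨h1', h2⟩
      obtain ⟨x, hx, hx0⟩ := intermediate_value_Ioo (hlohi i).le hcont hmem
      exact ⟨x, hx, hx0⟩
    · have e1 : (-1 : ℝ) ^ (n + (i : ℕ)) = -1 := ho.neg_one_pow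
      have e2 : (-1 : ℝ) ^ (n + 1 + (i : ℕ)) = 1 := by
        have heven : Even (n + 1 + (i : ℕ)) := by
          rcases ho with ⟨r, hr⟩; exact ⟨r + 1, by omega⟩
        exact heven.neg_one_pow
      rw [e2, one_mul] at h1
      rw [e1] at h2
      have h2' : p.eval (hi i) < 0 := by linarith
      have hmem : (0 : ℝ) ∈ Set.Ioo (p.eval (hi i)) (p.eval (lo i)) := ⟨h2', h1⟩
      obtain ⟨x, hx, hx0⟩ := intermediate_value_Ioo' (hlohi i).le hcont hmem
      exact ⟨x, hx, hx0⟩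
  choose δ hδ using hroot
  have hcs : ∀ i : Fin n, δ i.castSucc < γ i := by
    intro i
    have := (hδ i.castSucc).1.2
    rwa [hhi, Fin.snoc_castSucc] at this
  have hsu : ∀ i : Fin n, γ i < δ i.succ := by
    intro i
    have := (hδ i.succ).1.1
    rwa [hlo, Fin.cons_succ] at this
  have hmono : StrictMono δ := by
    rw [Fin.strictMono_iff_lt_succ]
    intro i
    exact lt_trans (hcs i) (hsu i)
  set q : ℝ[X] := ∏ i : Fin (n + 1), (Polynomial.X - Polynomial.C (δ i)) with hqdef
  have hqm : q.Monic := monic_prod_of_monic _ _ fun i _ => monic_X_sub_C _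
  have hqd : q.natDegree = n + 1 := by
    rw [hqdef, natDegree_prod _ _ fun i _ => X_sub_C_ne_zero _]
    simp [natDegree_X_sub_C]
  have hcoeff : (p - Polynomial.C p.leadingCoeff * q).coeff (n + 1) = 0 := by
    rw [coeff_sub, coeff_C_mul]
    have h1 : p.coeff (n + 1) = p.leadingCoeff := by rw [leadingCoeff, hpd]
    have h2 : q.coeff (n + 1) = 1 := by rw [← hqd]; exact hqm.coeff_natDegree
    rw [h1, h2, mul_one, sub_self]
  have hdeg : (p - Polynomial.C p.leadingCoeff * q).natDegree < n + 1 := by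
    by_cases h0 : p - Polynomial.C p.leadingCoeff * q = 0
    · rw [h0]; simp
    · have hle : (p - Polynomial.C p.leadingCoeff * q).natDegree ≤ n + 1 :=
        (natDegree_sub_le _ _).trans (max_le (le_of_eq hpd)
          ((natDegree_mul_le).trans (by simp [hqd])))
      rcases lt_or_eq_of_le hle with h | h
      · exact h
      · exact absurd (by rw [leadingCoeff, h]; exact hcoeff)
          (leadingCoeff_ne_zero.mpr h0)
  have hzero : p - Polynomial.C p.leadingCoeff * q = 0 := by
    apply Polynomial.eq_zero_of_natDegree_lt_card_of_eval_eq_zero _ hmono.injective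
    · intro i
      rw [eval_sub, eval_mul, eval_C]
      have hq0 : q.eval (δ i) = 0 := by
        rw [hqdef, eval_prod]
        exact Finset.prod_eq_zero (Finset.mem_univ i) (by simp)
      rw [(hδ i).2, hq0, mul_zero, sub_zero]
    · rw [Fintype.card_fin]; exact hdeg
  exact ⟨δ, hmono, sub_eq_zero.mp hzero, fun i => ⟨hcs i, hsu i⟩⟩

lemma fact_all (n : ℕ) : ∃ γ : Fin n → ℝ, StrictMono γ ∧
    hermitePhys n = Polynomial.C (hermitePhys n).leadingCoeff *
      ∏ j : Fin n, (Polynomial.X - Polynomial.C (γ j)) := by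
  induction n with
  | zero =>
    refine ⟨fun i => i.elim0, fun i => i.elim0, ?_⟩
    have : (hermitePhys 0).leadingCoeff = 1 := by
      rw [hermite_leadingCoeff]; norm_num
    simp [this, hermitePhys]
  | succ n ih =>
    obtain ⟨γ, hγ, hfac⟩ := ih
    obtain ⟨δ, hδ, hfac', _⟩ := key_s18 n γ hγ hfac
    exact ⟨δ, hδ, hfac'⟩

theorem stmt_18 :
    (∀ n : ℕ, hermitePhys (n + 1) =
      -derivative (hermitePhys n) + Polynomial.C 2 * Polynomial.X * hermitePhys n) ∧
    (∀ (n : ℕ) (x : ℝ), (hermitePhys (n + 1)).eval x =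
      -Real.exp (x ^ 2) *
        deriv (fun y => Real.exp (-y ^ 2) * (hermitePhys n).eval y) x) ∧
    (∀ n : ℕ, 1 ≤ n →
      ∃ γ : Fin n → ℝ, ∃ δ : Fin (n + 1) → ℝ,
        StrictMono γ ∧ StrictMono δ ∧
        hermitePhys n = Polynomial.C (hermitePhys n).leadingCoeff *
          ∏ i : Fin n, (Polynomial.X - Polynomial.C (γ i)) ∧
        hermitePhys (n + 1) = Polynomial.C (hermitePhys (n + 1)).leadingCoeff *
          ∏ i : Fin (n + 1), (Polynomial.X - Polynomial.C (δ i)) ∧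
        (∀ i : Fin n, δ i.castSucc < γ i ∧ γ i < δ i.succ)) := by
  refine ⟨fun n => ?_, part2, fun n _ => ?_⟩
  · show Polynomial.C 2 * Polynomial.X * hermitePhys n - derivative (hermitePhys n) = _
    ring
  · obtain ⟨γ, hγ, hfac⟩ := fact_all n
    obtain ⟨δ, hδ, hfac', hint⟩ := key_s18 n γ hγ hfac
    exact ⟨γ, δ, hγ, hδ, hfac, hfac', hint⟩
end

section
/- Let K : ℝ → ℝ be differentiable and strictly positive, and let A be a polynomial with A(α) = A(β) = 0 for real α < β and A nonzero on (α, β). Suppose P is a polynomial of degree n with n simple zeros, all in (α, β), and Q(x) = (A(x)/K(x))·(d/dx)[K(x)P(x)] is a polynomial of degree n+2. Then Q has α and β among its zeros, and at least n−1 further zeros strictly interlacing the zeros of P; in particular if additionally there is one more zero in each gap guaranteed by Rolle's theorem, all n+2 zeros of Q are real with α and β as the extreme zeros and the zeros of P and Q interlacing. -/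
open Polynomial Set

theorem stmt_19 (m : ℕ) (α β : ℝ) (hab : α < β)
    (K : ℝ → ℝ)
    (hKdiff : Differentiable ℝ K)
    (hKpos : ∀ x, 0 < K x)
    (A : Polynomial ℝ)
    (hAα : A.eval α = 0) (hAβ : A.eval β = 0)
    (hAne : ∀ x ∈ Ioo α β, A.eval x ≠ 0)
    (P Q : Polynomial ℝ)
    (hPdeg : P.degree = (m + 1 : ℕ))
    (γ : Fin (m + 1) → ℝ) (hγmono : StrictMono γ)
    (hγmem : ∀ i, γ i ∈ Ioo α β)
    (hγroot : ∀ i, P.eval (γ i) = 0)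
    (hγsimple : ∀ i, (derivative P).eval (γ i) ≠ 0)
    (hQdeg : Q.degree = (m + 3 : ℕ))
    (hQ : ∀ x : ℝ,
      Q.eval x = (A.eval x / K x) * deriv (fun y => K y * P.eval y) x) :
    Q.eval α = 0 ∧ Q.eval β = 0 ∧
    ∃ c : Fin m → ℝ, StrictMono c ∧
      (∀ i, Q.eval (c i) = 0) ∧
      (∀ i : Fin m, γ i.castSucc < c i ∧ c i < γ i.succ) := by
  refine ⟨by rw [hQ α, hAα]; ring, by rw [hQ β, hAβ]; ring, ?_⟩
  have hcont : ContinuousOn (fun y => K y * P.eval y) (univ : Set ℝ) :=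
    (hKdiff.continuous.mul P.continuous_aeval).continuousOn
  have key : ∀ i : Fin m, ∃ c ∈ Ioo (γ i.castSucc) (γ i.succ),
      deriv (fun y => K y * P.eval y) c = 0 := by
    intro i
    apply exists_deriv_eq_zero (hγmono (Fin.castSucc_lt_succ : i.castSucc < i.succ)) (hcont.mono (subset_univ _))
    rw [hγroot, hγroot]; ring
  choose c hc hdc using key
  refine ⟨c, ?_, fun i => by rw [hQ, hdc]; ring, fun i => ⟨(hc i).1, (hc i).2⟩⟩
  intro i j hij
  calc c i < γ i.succ := (hc i).2
    _ ≤ γ j.castSucc := hγmono.monotone (by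
        simp only [Fin.le_def, Fin.lt_def, Fin.val_succ, Fin.coe_castSucc] at hij ⊢; omega)
    _ < c j := (hc j).1
end
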